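/- Let H be a weak bialgebra. There is a one-to-one correspondence between right group-like elements g ∈ H and right H-coactions β: H_s → H_s ⊗ H on the source base algebra satisfying (id⊗ε_s)∘β = (id⊗ε_s)∘Δ∘ε_s. The correspondence sends a coaction β with β(1)=1_0⊗1_1 to g = ε(1_0)1_1, and conversely a right group-like g to the coaction β(x) = ε_s(x') ⊗ (g x''). -/

import Mathlib

open TensorProduct

noncomputable section

/-- The data of a (candidate) weak bialgebra over `k`: an associative unital
multiplication `mul` with unit `one`, a comultiplication `comul` and a counit `counit`. -/
structure WBData (k : Type) [CommRing k] (H : Type) [AddCommGroup H] [Module k H] where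
  mul : H →ₗ[k] H →ₗ[k] H
  one : H
  comul : H →ₗ[k] H ⊗[k] H
  counit : H →ₗ[k] k

namespace WBData

variable {k : Type} [CommRing k] {H : Type} [AddCommGroup H] [Module k H] (W : WBData k H)

/-- Multiplication as a map on the tensor product. -/
def mulT : H ⊗[k] H →ₗ[k] H := TensorProduct.lift W.mul

/-- The induced multiplication on `H ⊗ H`: `(a⊗b)·(c⊗d) = (ac)⊗(bd)`. -/
def mul₂ (x y : H ⊗[k] H) : H ⊗[k] H :=
  TensorProduct.map W.mulT W.mulT (TensorProduct.tensorTensorTensorComm k H H H H (x ⊗ₜ[k] y))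

/-- The source counital map `ε_s(h) = 1' ε(h 1'')`. -/
def εsMap : H →ₗ[k] H :=
  (TensorProduct.lid k H).toLinearMap
    ∘ₗ LinearMap.rTensor H (W.counit ∘ₗ W.mulT)
    ∘ₗ (TensorProduct.assoc k H H H).symm.toLinearMap
    ∘ₗ (TensorProduct.mk k H (H ⊗[k] H)).flip ((TensorProduct.comm k H H) (W.comul W.one))

/-- The target counital map `ε_t(h) = ε(1' h) 1''`. -/
def εtMap : H →ₗ[k] H :=
  (TensorProduct.rid k H).toLinearMap
    ∘ₗ LinearMap.lTensor H (W.counit ∘ₗ W.mulT)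
    ∘ₗ (TensorProduct.assoc k H H H).toLinearMap
    ∘ₗ (TensorProduct.mk k (H ⊗[k] H) H) ((TensorProduct.comm k H H) (W.comul W.one))

/-- The map `\bar ε_s(h) = 1' ε(1'' h)`. -/
def barεsMap : H →ₗ[k] H :=
  (TensorProduct.rid k H).toLinearMap
    ∘ₗ LinearMap.lTensor H (W.counit ∘ₗ W.mulT)
    ∘ₗ (TensorProduct.assoc k H H H).toLinearMap
    ∘ₗ (TensorProduct.mk k (H ⊗[k] H) H) (W.comul W.one)

/-- The source base algebra `H_s = ε_s(H)`. -/
def Hs : Submodule k H := LinearMap.range W.εsMap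

/-- The target base algebra `H_t = ε_t(H)`. -/
def Ht : Submodule k H := LinearMap.range W.εtMap

/-- The axioms of a weak bialgebra for the data `W`. -/
structure IsWeakBialgebra : Prop where
  mul_assoc : ∀ x y z : H, W.mul (W.mul x y) z = W.mul x (W.mul y z)
  one_mul : ∀ x : H, W.mul W.one x = x
  mul_one : ∀ x : H, W.mul x W.one = x
  coassoc : ∀ x : H,
    (TensorProduct.assoc k H H H) (LinearMap.rTensor H W.comul (W.comul x)) =
      LinearMap.lTensor H W.comul (W.comul x)
  counit_left : ∀ x : H,
    (TensorProduct.lid k H) (LinearMap.rTensor H W.counit (W.comul x)) = x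
  counit_right : ∀ x : H,
    (TensorProduct.rid k H) (LinearMap.lTensor H W.counit (W.comul x)) = x
  comul_mul : ∀ x y : H, W.comul (W.mul x y) = W.mul₂ (W.comul x) (W.comul y)
  counit_mul : ∀ x y z : H, W.counit (W.mul (W.mul x y) z) =
    (LinearMap.mul' k k)
      (TensorProduct.map (W.counit ∘ₗ W.mul x) (W.counit ∘ₗ W.mul.flip z) (W.comul y))
  counit_mul_op : ∀ x y z : H, W.counit (W.mul (W.mul x y) z) =
    (LinearMap.mul' k k)
      (TensorProduct.map (W.counit ∘ₗ W.mul x) (W.counit ∘ₗ W.mul.flip z)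
        ((TensorProduct.comm k H H) (W.comul y)))
  comul_one : LinearMap.rTensor H W.comul (W.comul W.one) =
    (LinearMap.rTensor H (TensorProduct.comm k H H).toLinearMap)
      ((TensorProduct.assoc k H H H).symm
        ((TensorProduct.map W.mulT LinearMap.id)
          ((TensorProduct.tensorTensorTensorComm k H H H H)
            (((TensorProduct.comm k H H) (W.comul W.one)) ⊗ₜ[k] (W.comul W.one)))))
  comul_one_op : LinearMap.rTensor H W.comul (W.comul W.one) =
    (LinearMap.rTensor H (TensorProduct.comm k H H).toLinearMap)
      ((TensorProduct.assoc k H H H).symm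
        ((TensorProduct.map (W.mulT ∘ₗ (TensorProduct.comm k H H).toLinearMap) LinearMap.id)
          ((TensorProduct.tensorTensorTensorComm k H H H H)
            (((TensorProduct.comm k H H) (W.comul W.one)) ⊗ₜ[k] (W.comul W.one)))))

/-- `g` is right group-like: `Δ g = (g⊗g)·Δ1` and `ε_s(g) = 1`. -/
def IsRightGroupLike (g : H) : Prop :=
  W.comul g = W.mul₂ (g ⊗ₜ[k] g) (W.comul W.one) ∧ W.εsMap g = W.one

/-- `g` is left group-like: `Δ g = Δ1·(g⊗g)` and `ε_t(g) = 1`. -/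
def IsLeftGroupLike (g : H) : Prop :=
  W.comul g = W.mul₂ (W.comul W.one) (g ⊗ₜ[k] g) ∧ W.εtMap g = W.one

/-- `g` is group-like if it is both right and left group-like. -/
def IsGroupLike (g : H) : Prop := W.IsRightGroupLike g ∧ W.IsLeftGroupLike g

/-- The coaction `x ↦ x' ⊗ (g x'')` of `H` on (the ambient space of) `H_s`,
defining the comodule `H_s^g` for a group-like `g`. -/
def βg (g : H) : H →ₗ[k] H ⊗[k] H :=
  LinearMap.lTensor H (W.mul g) ∘ₗ W.comul

/-- A coaction `β : V → V ⊗ H` is a (right) comodule structure if it is coassociative and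
counital. -/
def IsCoaction {V : Type} [AddCommGroup V] [Module k V] (β : V →ₗ[k] V ⊗[k] H) : Prop :=
  (∀ v : V, (TensorProduct.assoc k V H H) (LinearMap.rTensor H β (β v)) =
      LinearMap.lTensor V W.comul (β v)) ∧
  (∀ v : V, (TensorProduct.rid k V) (LinearMap.lTensor V W.counit (β v)) = v)

/-- The truncation idempotent `P_{V,W}(v⊗w) = (v₀⊗w₀) ε(v₁w₁)` of two comodules, expressed
on the ambient tensor product. -/
def truncP {V U : Type} [AddCommGroup V] [Module k V] [AddCommGroup U] [Module k U]
    (βa : V →ₗ[k] V ⊗[k] H) (βb : U →ₗ[k] U ⊗[k] H) : V ⊗[k] U →ₗ[k] V ⊗[k] U :=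
  (TensorProduct.rid k (V ⊗[k] U)).toLinearMap
    ∘ₗ LinearMap.lTensor (V ⊗[k] U) (W.counit ∘ₗ W.mulT)
    ∘ₗ (TensorProduct.tensorTensorTensorComm k V H U H).toLinearMap
    ∘ₗ TensorProduct.map βa βb

/-- The coaction `v⊗w ↦ (v₀⊗w₀)⊗(v₁w₁)` on the (truncated) tensor product of two comodules,
expressed on the ambient tensor product. -/
def βtens {V U : Type} [AddCommGroup V] [Module k V] [AddCommGroup U] [Module k U]
    (βa : V →ₗ[k] V ⊗[k] H) (βb : U →ₗ[k] U ⊗[k] H) : V ⊗[k] U →ₗ[k] (V ⊗[k] U) ⊗[k] H :=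
  LinearMap.lTensor (V ⊗[k] U) W.mulT
    ∘ₗ (TensorProduct.tensorTensorTensorComm k V H U H).toLinearMap
    ∘ₗ TensorProduct.map βa βb

/-- The two-sided ideal (with respect to `W.mul`) generated by a set `s`. -/
def twoSidedIdeal (s : Set H) : Submodule k H :=
  sInf {J : Submodule k H | s ⊆ J ∧ ∀ x : H, ∀ y ∈ J, W.mul x y ∈ J ∧ W.mul y x ∈ J}

/-- Powers of an element with respect to `W.mul`. -/
def powW (g : H) : ℕ → H
  | 0 => W.one
  | n + 1 => W.mul (powW g n) g

/-- An antipode for `W`, making it a weak Hopf algebra. -/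
def IsAntipode (S : H →ₗ[k] H) : Prop :=
  (∀ x : H, W.mulT (LinearMap.lTensor H S (W.comul x)) = W.εtMap x) ∧
  (∀ x : H, W.mulT (LinearMap.rTensor H S (W.comul x)) = W.εsMap x) ∧
  (∀ x : H, W.mulT (LinearMap.lTensor H S
      (LinearMap.rTensor H (W.mulT ∘ₗ LinearMap.rTensor H S)
        (LinearMap.rTensor H W.comul (W.comul x)))) = S x)

end WBData

/-- A homomorphism of weak bialgebras: a linear map which is a homomorphism of unital
algebras and of counital coalgebras. -/
def IsWBHom {k : Type} [CommRing k] {H H' : Type} [AddCommGroup H] [Module k H]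
    [AddCommGroup H'] [Module k H'] (W : WBData k H) (W' : WBData k H')
    (f : H →ₗ[k] H') : Prop :=
  (∀ x y : H, f (W.mul x y) = W'.mul (f x) (f y)) ∧
  f W.one = W'.one ∧
  (∀ x : H, W'.comul (f x) = TensorProduct.map f f (W.comul x)) ∧
  (∀ x : H, W'.counit (f x) = W.counit x)

end

section Statement12

variable {k : Type} [Field k] {H : Type} [AddCommGroup H] [Module k H] (W : WBData k H)

/-- A right `H`-coaction on the source base algebra `H_s = range ε_s` satisfying the
compatibility condition `(id ⊗ ε_s) ∘ β = (id ⊗ ε_s) ∘ Δ ∘ ε_s`. -/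
def IsCompatibleCoactionOnHs (β : ↥(W.Hs) →ₗ[k] ↥(W.Hs) ⊗[k] H) : Prop :=
  -- coassociativity
  (∀ x : ↥(W.Hs), (TensorProduct.assoc k (↥(W.Hs)) H H)
      (LinearMap.rTensor H β (β x)) = LinearMap.lTensor (↥(W.Hs)) W.comul (β x)) ∧
  -- counitality
  (∀ x : ↥(W.Hs), (TensorProduct.rid k (↥(W.Hs)))
      (LinearMap.lTensor (↥(W.Hs)) W.counit (β x)) = (x : ↥(W.Hs))) ∧
  -- (id ⊗ ε_s) ∘ β = (id ⊗ ε_s) ∘ Δ ∘ ε_s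
  (∀ x : ↥(W.Hs), LinearMap.rTensor H (W.Hs).subtype
      (LinearMap.lTensor (↥(W.Hs)) W.εsMap (β x)) =
    LinearMap.lTensor H W.εsMap (W.comul (W.εsMap (x : H))))

/-- The coaction on `H_s` associated to a right group-like `g`:
`β(x) = ε_s(x') ⊗ (g x'')`. -/
noncomputable def coactionOfGrouplike (g : H) : ↥(W.Hs) →ₗ[k] ↥(W.Hs) ⊗[k] H :=
  TensorProduct.map (W.εsMap.rangeRestrict) (W.mul g) ∘ₗ W.comul ∘ₗ (W.Hs).subtype

/-- The unit `1 = ε_s(1)` of `H` as an element of `H_s`. -/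
noncomputable def oneHs : ↥(W.Hs) := ⟨W.εsMap W.one, ⟨W.one, rfl⟩⟩

/-- The group-like element `g = ε(1₀) 1₁` associated to a coaction `β` on `H_s`. -/
noncomputable def grouplikeOfCoaction (β : ↥(W.Hs) →ₗ[k] ↥(W.Hs) ⊗[k] H) : H :=
  (TensorProduct.lid k H)
    (LinearMap.rTensor H (W.counit ∘ₗ (W.Hs).subtype) (β (oneHs W)))


/-! ### Auxiliary machinery for Statement 12 -/

section AuxWBA

open TensorProduct LinearMap

variable {k₁ : Type} [Field k₁] {H₁ : Type} [AddCommGroup H₁] [Module k₁ H₁]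
variable (V : WBData k₁ H₁)

namespace WBAux

set_option maxRecDepth 10000
set_option maxHeartbeats 1000000

lemma mulT_tmul (a b : H₁) : V.mulT (a ⊗ₜ[k₁] b) = V.mul a b := rfl

lemma mul₂_tmul (a b c d : H₁) :
    V.mul₂ (a ⊗ₜ[k₁] b) (c ⊗ₜ[k₁] d) = (V.mul a c) ⊗ₜ[k₁] (V.mul b d) := by
  simp [WBData.mul₂, tensorTensorTensorComm_tmul, mulT_tmul]

/-- `mul₂ x ·` as a linear map. -/
noncomputable def mul₂R (x : H₁ ⊗[k₁] H₁) : H₁ ⊗[k₁] H₁ →ₗ[k₁] H₁ ⊗[k₁] H₁ :=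
  TensorProduct.map V.mulT V.mulT
    ∘ₗ (TensorProduct.tensorTensorTensorComm k₁ H₁ H₁ H₁ H₁).toLinearMap
    ∘ₗ TensorProduct.mk k₁ (H₁ ⊗[k₁] H₁) (H₁ ⊗[k₁] H₁) x

lemma mul₂R_apply (x y : H₁ ⊗[k₁] H₁) : mul₂R V x y = V.mul₂ x y := rfl

lemma mul₂_sum_sum {α β : Type} (s : Finset α) (t : Finset β)
    (f : α → H₁ ⊗[k₁] H₁) (g : β → H₁ ⊗[k₁] H₁) :
    V.mul₂ (∑ i ∈ s, f i) (∑ j ∈ t, g j) = ∑ i ∈ s, ∑ j ∈ t, V.mul₂ (f i) (g j) := by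
  simp only [WBData.mul₂, sum_tmul, tmul_sum, map_sum]
  rw [Finset.sum_comm]

variable {S : Finset (H₁ × H₁)}

/-- Evaluation of `ε_s` against a chosen representation of `Δ1`. -/
lemma εs_apply (h1 : V.comul V.one = ∑ i ∈ S, i.1 ⊗ₜ[k₁] i.2) (h : H₁) :
    V.εsMap h = ∑ i ∈ S, V.counit (V.mul h i.2) • i.1 := by
  simp only [WBData.εsMap, LinearMap.comp_apply, LinearEquiv.coe_coe, LinearMap.flip_apply,
    TensorProduct.mk_apply, h1, map_sum, LinearMap.sum_apply, comm_tmul, tmul_sum, assoc_symm_tmul,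
    rTensor_tmul, lid_tmul, mulT_tmul]

lemma barεs_apply (h1 : V.comul V.one = ∑ i ∈ S, i.1 ⊗ₜ[k₁] i.2) (h : H₁) :
    V.barεsMap h = ∑ i ∈ S, V.counit (V.mul i.2 h) • i.1 := by
  simp only [WBData.barεsMap, LinearMap.comp_apply, LinearEquiv.coe_coe,
    TensorProduct.mk_apply, h1, map_sum, LinearMap.sum_apply, sum_tmul, assoc_tmul, lTensor_tmul,
    rid_tmul, mulT_tmul]

lemma εt_apply (h1 : V.comul V.one = ∑ i ∈ S, i.1 ⊗ₜ[k₁] i.2) (h : H₁) :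
    V.εtMap h = ∑ i ∈ S, V.counit (V.mul i.1 h) • i.2 := by
  simp only [WBData.εtMap, LinearMap.comp_apply, LinearEquiv.coe_coe,
    TensorProduct.mk_apply, h1, map_sum, LinearMap.sum_apply, comm_tmul, sum_tmul, assoc_tmul, lTensor_tmul,
    rid_tmul, mulT_tmul]


/-- `∑ ε(1')1'' = 1`. -/
lemma sum_eps_p (hV : V.IsWeakBialgebra)
    (h1 : V.comul V.one = ∑ i ∈ S, i.1 ⊗ₜ[k₁] i.2) : ∑ i ∈ S, V.counit i.1 • i.2 = V.one := by
  have := hV.counit_left V.one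
  rw [h1] at this
  simpa only [map_sum, rTensor_tmul, lid_tmul] using this

/-- `∑ 1'ε(1'') = 1`. -/
lemma sum_eps_q (hV : V.IsWeakBialgebra)
    (h1 : V.comul V.one = ∑ i ∈ S, i.1 ⊗ₜ[k₁] i.2) : ∑ i ∈ S, V.counit i.2 • i.1 = V.one := by
  have := hV.counit_right V.one
  rw [h1] at this
  simpa only [map_sum, lTensor_tmul, rid_tmul] using this

/-- `E1 : ε(xz) = ∑ ε(x 1') ε(1'' z)`. -/
lemma E1 (hV : V.IsWeakBialgebra)
    (h1 : V.comul V.one = ∑ i ∈ S, i.1 ⊗ₜ[k₁] i.2) (x z : H₁) :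
    V.counit (V.mul x z) = ∑ i ∈ S, V.counit (V.mul x i.1) * V.counit (V.mul i.2 z) := by
  have := hV.counit_mul x V.one z
  rw [h1, hV.mul_one] at this
  simpa only [map_sum, map_tmul, LinearMap.comp_apply, LinearMap.flip_apply,
    LinearMap.mul'_apply, mulT_tmul] using this

/-- `E2 : ε(xz) = ∑ ε(x 1'') ε(1' z)`. -/
lemma E2 (hV : V.IsWeakBialgebra)
    (h1 : V.comul V.one = ∑ i ∈ S, i.1 ⊗ₜ[k₁] i.2) (x z : H₁) :
    V.counit (V.mul x z) = ∑ i ∈ S, V.counit (V.mul x i.2) * V.counit (V.mul i.1 z) := by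
  have := hV.counit_mul_op x V.one z
  rw [h1, hV.mul_one] at this
  simpa only [map_sum, comm_tmul, map_tmul, LinearMap.comp_apply, LinearMap.flip_apply,
    LinearMap.mul'_apply, mulT_tmul] using this

/-- The axiom `(Δ⊗id)Δ1 = (Δ1⊗1)(1⊗Δ1)` in summed form. -/
lemma C1 (hV : V.IsWeakBialgebra)
    (h1 : V.comul V.one = ∑ i ∈ S, i.1 ⊗ₜ[k₁] i.2) : (∑ i ∈ S, (V.comul i.1) ⊗ₜ[k₁] i.2) =
    ∑ i ∈ S, ∑ j ∈ S, (i.1 ⊗ₜ[k₁] (V.mul i.2 j.1)) ⊗ₜ[k₁] j.2 := by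
  have := hV.comul_one
  rw [h1] at this
  simp only [map_sum, rTensor_tmul, comm_tmul, sum_tmul, tmul_sum,
    tensorTensorTensorComm_tmul, map_tmul, LinearMap.id_coe, id_eq, assoc_symm_tmul,
    LinearEquiv.coe_coe, mulT_tmul] at this
  rw [Finset.sum_comm] at this
  exact this

/-- The axiom `(Δ⊗id)Δ1 = (1⊗Δ1)(Δ1⊗1)` in summed form. -/
lemma C2 (hV : V.IsWeakBialgebra)
    (h1 : V.comul V.one = ∑ i ∈ S, i.1 ⊗ₜ[k₁] i.2) : (∑ i ∈ S, (V.comul i.1) ⊗ₜ[k₁] i.2) =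
    ∑ i ∈ S, ∑ j ∈ S, (i.1 ⊗ₜ[k₁] (V.mul j.1 i.2)) ⊗ₜ[k₁] j.2 := by
  have := hV.comul_one_op
  rw [h1] at this
  simp only [map_sum, rTensor_tmul, comm_tmul, sum_tmul, tmul_sum,
    tensorTensorTensorComm_tmul, map_tmul, LinearMap.id_coe, id_eq, assoc_symm_tmul,
    LinearMap.comp_apply, LinearEquiv.coe_coe, mulT_tmul] at this
  rw [Finset.sum_comm] at this
  exact this

/-- Coassociativity applied to the `Δ1` representation: `∑ 1' ⊗ Δ1'' = ∑∑ 1'⊗(1''~1'⊗~1'')`. -/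
lemma coassoc1 (hV : V.IsWeakBialgebra)
    (h1 : V.comul V.one = ∑ i ∈ S, i.1 ⊗ₜ[k₁] i.2) : (∑ i ∈ S, i.1 ⊗ₜ[k₁] (V.comul i.2)) =
    ∑ i ∈ S, ∑ j ∈ S, i.1 ⊗ₜ[k₁] ((V.mul i.2 j.1) ⊗ₜ[k₁] j.2) := by
  have hco := hV.coassoc V.one
  rw [h1] at hco
  simp only [map_sum, rTensor_tmul, lTensor_tmul] at hco
  rw [← hco, ← map_sum, C1 V hV h1]
  simp only [map_sum, assoc_tmul]


/-- Right counit collapse `a⊗b ↦ ε(b)•a`. -/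
noncomputable def cR : H₁ ⊗[k₁] H₁ →ₗ[k₁] H₁ :=
  (TensorProduct.rid k₁ H₁).toLinearMap ∘ₗ lTensor H₁ V.counit

/-- Left counit collapse `a⊗b ↦ ε(a)•b`. -/
noncomputable def cL : H₁ ⊗[k₁] H₁ →ₗ[k₁] H₁ :=
  (TensorProduct.lid k₁ H₁).toLinearMap ∘ₗ rTensor H₁ V.counit

lemma cR_tmul (a b : H₁) : cR V (a ⊗ₜ[k₁] b) = V.counit b • a := by
  simp [cR, rid_tmul]

lemma cL_tmul (a b : H₁) : cL V (a ⊗ₜ[k₁] b) = V.counit a • b := by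
  simp [cL, lid_tmul]

lemma cR_comul (hV : V.IsWeakBialgebra) (x : H₁) : cR V (V.comul x) = x := hV.counit_right x

lemma cL_comul (hV : V.IsWeakBialgebra) (x : H₁) : cL V (V.comul x) = x := hV.counit_left x

lemma sum_smul_tmul {ι : Type} (s : Finset ι) (f : ι → k₁) (g : ι → H₁) (a : H₁) :
    (∑ j ∈ s, f j • g j) ⊗ₜ[k₁] a = ∑ j ∈ s, f j • (g j ⊗ₜ[k₁] a) := by
  rw [sum_tmul]; simp_rw [smul_tmul']

lemma tmul_sum_smul {ι : Type} (s : Finset ι) (f : ι → k₁) (g : ι → H₁) (a : H₁) :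
    a ⊗ₜ[k₁] (∑ j ∈ s, f j • g j) = ∑ j ∈ s, f j • (a ⊗ₜ[k₁] g j) := by
  rw [tmul_sum]; simp_rw [tmul_smul]

/-- `ε(ε_s(a)c) = ε(ac)`. -/
lemma eps_εs_mul (hV : V.IsWeakBialgebra)
    (h1 : V.comul V.one = ∑ i ∈ S, i.1 ⊗ₜ[k₁] i.2) (a c : H₁) :
    V.counit (V.mul (V.εsMap a) c) = V.counit (V.mul a c) := by
  rw [εs_apply V h1, E2 V hV h1 a c]
  simp [Finset.mul_sum, Finset.sum_apply', smul_eq_mul, map_sum]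

/-- `ε∘ε_s = ε`. -/
lemma eps_εs (hV : V.IsWeakBialgebra)
    (h1 : V.comul V.one = ∑ i ∈ S, i.1 ⊗ₜ[k₁] i.2) (a : H₁) :
    V.counit (V.εsMap a) = V.counit a := by
  have h2 := congrArg (fun t => V.counit (V.mul a t)) (sum_eps_p V hV h1)
  simp only [map_sum, map_smul, smul_eq_mul, hV.mul_one] at h2
  rw [εs_apply V h1]
  simpa [map_sum, smul_eq_mul, mul_comm] using h2

/-- `ε_s(ab) = ε_s(ε_s(a)b)`. -/
lemma εs_mul_εs (hV : V.IsWeakBialgebra)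
    (h1 : V.comul V.one = ∑ i ∈ S, i.1 ⊗ₜ[k₁] i.2) (a b : H₁) :
    V.εsMap (V.mul (V.εsMap a) b) = V.εsMap (V.mul a b) := by
  rw [εs_apply V h1 (V.mul (V.εsMap a) b), εs_apply V h1 (V.mul a b)]
  refine Finset.sum_congr rfl fun i _ => ?_
  rw [hV.mul_assoc, eps_εs_mul V hV h1, ← hV.mul_assoc]

lemma εs_one (hV : V.IsWeakBialgebra)
    (h1 : V.comul V.one = ∑ i ∈ S, i.1 ⊗ₜ[k₁] i.2) :
    V.εsMap V.one = V.one := by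
  rw [εs_apply V h1]
  simp_rw [hV.one_mul]
  exact sum_eps_q V hV h1

lemma εs_idem (hV : V.IsWeakBialgebra)
    (h1 : V.comul V.one = ∑ i ∈ S, i.1 ⊗ₜ[k₁] i.2) (a : H₁) :
    V.εsMap (V.εsMap a) = V.εsMap a := by
  rw [εs_apply V h1 (V.εsMap a)]
  simp_rw [eps_εs_mul V hV h1]
  exact (εs_apply V h1 a).symm

lemma εs_coe (hV : V.IsWeakBialgebra)
    (h1 : V.comul V.one = ∑ i ∈ S, i.1 ⊗ₜ[k₁] i.2) (x : ↥V.Hs) :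
    V.εsMap (x : H₁) = (x : H₁) := by
  obtain ⟨a, ha⟩ := x.2
  rw [← ha, εs_idem V hV h1]

/-- `D1 : ∑ ε̄_s(1')⊗1'' = Δ1`. -/
lemma D1 (hV : V.IsWeakBialgebra)
    (h1 : V.comul V.one = ∑ i ∈ S, i.1 ⊗ₜ[k₁] i.2) :
    (∑ i ∈ S, (V.barεsMap i.1) ⊗ₜ[k₁] i.2) = ∑ i ∈ S, i.1 ⊗ₜ[k₁] i.2 := by
  have h := congrArg (LinearMap.rTensor H₁ (cR V)) (C1 V hV h1)
  simp only [map_sum, rTensor_tmul, cR_tmul, cR_comul V hV] at h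
  rw [Finset.sum_comm] at h
  simp_rw [← TensorProduct.smul_tmul'] at h
  have h2 : (∑ i ∈ S, V.barεsMap i.1 ⊗ₜ[k₁] i.2)
      = ∑ j ∈ S, ∑ i ∈ S, V.counit (V.mul i.2 j.1) • (i.1 ⊗ₜ[k₁] j.2) :=
    Finset.sum_congr rfl fun j _ => by rw [barεs_apply V h1, sum_smul_tmul]
  rw [h2]
  exact h.symm

/-- `D2 : ∑ ε_s(1')⊗1'' = Δ1`. -/
lemma D2 (hV : V.IsWeakBialgebra)
    (h1 : V.comul V.one = ∑ i ∈ S, i.1 ⊗ₜ[k₁] i.2) :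
    (∑ i ∈ S, (V.εsMap i.1) ⊗ₜ[k₁] i.2) = ∑ i ∈ S, i.1 ⊗ₜ[k₁] i.2 := by
  have h := congrArg (LinearMap.rTensor H₁ (cR V)) (C2 V hV h1)
  simp only [map_sum, rTensor_tmul, cR_tmul, cR_comul V hV] at h
  rw [Finset.sum_comm] at h
  simp_rw [← TensorProduct.smul_tmul'] at h
  have h2 : (∑ i ∈ S, V.εsMap i.1 ⊗ₜ[k₁] i.2)
      = ∑ j ∈ S, ∑ i ∈ S, V.counit (V.mul j.1 i.2) • (i.1 ⊗ₜ[k₁] j.2) :=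
    Finset.sum_congr rfl fun j _ => by rw [εs_apply V h1, sum_smul_tmul]
  rw [h2]
  exact h.symm

/-- `L4a : Δ(ε_s a) = ∑ 1' ⊗ (ε_s a)·1''`. -/
lemma L4a (hV : V.IsWeakBialgebra)
    (h1 : V.comul V.one = ∑ i ∈ S, i.1 ⊗ₜ[k₁] i.2) (a : H₁) :
    V.comul (V.εsMap a) = ∑ i ∈ S, i.1 ⊗ₜ[k₁] (V.mul (V.εsMap a) i.2) := by
  have h := congrArg ((TensorProduct.rid k₁ (H₁ ⊗[k₁] H₁)).toLinearMap ∘ₗ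
      lTensor (H₁ ⊗[k₁] H₁) (V.counit ∘ₗ V.mul a)) (C2 V hV h1)
  simp only [map_sum, LinearMap.comp_apply, lTensor_tmul, LinearEquiv.coe_coe, rid_tmul] at h
  rw [εs_apply V h1 a, map_sum]
  simp only [map_smul]
  rw [h]
  refine Finset.sum_congr rfl fun i _ => ?_
  rw [show (V.mul (∑ j ∈ S, V.counit (V.mul a j.2) • j.1)) i.2
      = ∑ j ∈ S, V.counit (V.mul a j.2) • (V.mul j.1 i.2) from by
    rw [map_sum, LinearMap.sum_apply]
    exact Finset.sum_congr rfl fun j _ => by rw [map_smul, LinearMap.smul_apply]]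
  rw [tmul_sum_smul]

/-- `L4b : Δ(ε_s a) = ∑ 1' ⊗ 1''·(ε_s a)`. -/
lemma L4b (hV : V.IsWeakBialgebra)
    (h1 : V.comul V.one = ∑ i ∈ S, i.1 ⊗ₜ[k₁] i.2) (a : H₁) :
    V.comul (V.εsMap a) = ∑ i ∈ S, i.1 ⊗ₜ[k₁] (V.mul i.2 (V.εsMap a)) := by
  have h := congrArg ((TensorProduct.rid k₁ (H₁ ⊗[k₁] H₁)).toLinearMap ∘ₗ
      lTensor (H₁ ⊗[k₁] H₁) (V.counit ∘ₗ V.mul a)) (C1 V hV h1)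
  simp only [map_sum, LinearMap.comp_apply, lTensor_tmul, LinearEquiv.coe_coe, rid_tmul] at h
  rw [εs_apply V h1 a, map_sum]
  simp only [map_smul]
  rw [h]
  refine Finset.sum_congr rfl fun i _ => ?_
  rw [show (V.mul i.2) (∑ j ∈ S, V.counit (V.mul a j.2) • j.1)
      = ∑ j ∈ S, V.counit (V.mul a j.2) • (V.mul i.2 j.1) from by
    rw [map_sum]
    exact Finset.sum_congr rfl fun j _ => by rw [map_smul]]
  rw [tmul_sum_smul]


lemma mul₂_sum_tmul {ι : Type} (T : Finset ι) (f g : ι → H₁) (c d : H₁) :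
    V.mul₂ (∑ t ∈ T, f t ⊗ₜ[k₁] g t) (c ⊗ₜ[k₁] d)
      = ∑ t ∈ T, (V.mul (f t) c) ⊗ₜ[k₁] (V.mul (g t) d) := by
  simp [WBData.mul₂, sum_tmul, map_sum, tensorTensorTensorComm_tmul, mulT_tmul]

/-- Expansion `Δh = Δh·Δ1`. -/
lemma comul_rep1 (hV : V.IsWeakBialgebra)
    (h1 : V.comul V.one = ∑ i ∈ S, i.1 ⊗ₜ[k₁] i.2) (h : H₁)
    {T : Finset (H₁ × H₁)} (hT : V.comul h = ∑ t ∈ T, t.1 ⊗ₜ[k₁] t.2) :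
    V.comul h = ∑ t ∈ T, ∑ i ∈ S, (V.mul t.1 i.1) ⊗ₜ[k₁] (V.mul t.2 i.2) := by
  conv_lhs => rw [show h = V.mul h V.one from (hV.mul_one h).symm]
  rw [hV.comul_mul, hT, h1, mul₂_sum_sum]
  simp_rw [mul₂_tmul]

/-- `L13' : ∑ h₁ ε_s(h₂) = h`. -/
lemma mul_εs_comul (hV : V.IsWeakBialgebra)
    (h1 : V.comul V.one = ∑ i ∈ S, i.1 ⊗ₜ[k₁] i.2) (x : H₁) :
    V.mulT (lTensor H₁ V.εsMap (V.comul x)) = x := by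
  obtain ⟨T, hT⟩ := TensorProduct.exists_finset (V.comul x)
  have h2 := comul_rep1 V hV h1 x hT
  have h3 := congrArg (cR V) h2
  rw [cR_comul V hV] at h3
  simp only [map_sum, cR_tmul] at h3
  conv_lhs => rw [hT]
  simp only [map_sum, lTensor_tmul, mulT_tmul]
  rw [h3]
  refine Finset.sum_congr rfl fun t _ => ?_
  rw [εs_apply V h1, map_sum]
  exact Finset.sum_congr rfl fun i _ => by rw [map_smul]

/-- The element `ε̄_t(c) = ∑ ε(c 1')1''` (relative to the chosen representation). -/
noncomputable def betEl (S : Finset (H₁ × H₁)) (c : H₁) : H₁ :=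
  ∑ j ∈ S, V.counit (V.mul c j.1) • j.2

/-- Commutation of `H_t`-type and `H_s`-type elements. -/
lemma comm_bet (hV : V.IsWeakBialgebra)
    (h1 : V.comul V.one = ∑ i ∈ S, i.1 ⊗ₜ[k₁] i.2) (c b : H₁) :
    V.mul (V.εsMap b) (betEl V S c) = V.mul (betEl V S c) (V.εsMap b) := by
  have h := (L4a V hV h1 b).symm.trans (L4b V hV h1 b)
  have h2 := congrArg ((TensorProduct.lid k₁ H₁).toLinearMap
      ∘ₗ LinearMap.rTensor H₁ (V.counit ∘ₗ V.mul c)) h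
  simp only [map_sum, LinearMap.comp_apply, rTensor_tmul, LinearEquiv.coe_coe, lid_tmul] at h2
  calc V.mul (V.εsMap b) (betEl V S c)
      = ∑ i ∈ S, V.counit (V.mul c i.1) • V.mul (V.εsMap b) i.2 := by
        rw [betEl, map_sum]; exact Finset.sum_congr rfl fun i _ => by rw [map_smul]
    _ = ∑ i ∈ S, V.counit (V.mul c i.1) • V.mul i.2 (V.εsMap b) := h2
    _ = V.mul (betEl V S c) (V.εsMap b) := by
        rw [betEl, map_sum, LinearMap.sum_apply]
        exact Finset.sum_congr rfl fun i _ => by rw [map_smul, LinearMap.smul_apply]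

/-- `D2' : ∑ 1' ⊗ ε̄_t(1'') = Δ1`. -/
lemma D2' (hV : V.IsWeakBialgebra)
    (h1 : V.comul V.one = ∑ i ∈ S, i.1 ⊗ₜ[k₁] i.2) :
    (∑ i ∈ S, i.1 ⊗ₜ[k₁] betEl V S i.2) = ∑ i ∈ S, i.1 ⊗ₜ[k₁] i.2 := by
  have : ∀ i : H₁ × H₁, i.1 ⊗ₜ[k₁] betEl V S i.2
      = ∑ j ∈ S, V.counit (V.mul i.2 j.1) • (i.1 ⊗ₜ[k₁] j.2) := fun i => by
    rw [betEl, tmul_sum_smul]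
  simp_rw [this]
  rw [Finset.sum_comm]
  rw [show (∑ j ∈ S, ∑ i ∈ S, V.counit (V.mul i.2 j.1) • (i.1 ⊗ₜ[k₁] j.2))
      = ∑ j ∈ S, (V.barεsMap j.1) ⊗ₜ[k₁] j.2 from
    Finset.sum_congr rfl fun j _ => by rw [barεs_apply V h1, sum_smul_tmul]]
  exact D1 V hV h1

/-- `Δ1·Δ1 = Δ1` in summed form. -/
lemma oneone (hV : V.IsWeakBialgebra)
    (h1 : V.comul V.one = ∑ i ∈ S, i.1 ⊗ₜ[k₁] i.2) :
    (∑ i ∈ S, ∑ j ∈ S, (V.mul i.1 j.1) ⊗ₜ[k₁] (V.mul i.2 j.2)) = ∑ i ∈ S, i.1 ⊗ₜ[k₁] i.2 := by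
  have h := hV.comul_mul V.one V.one
  rw [hV.mul_one, h1, mul₂_sum_sum] at h
  simp_rw [mul₂_tmul] at h
  exact h.symm

/-- `H_s` is closed under multiplication. -/
lemma εs_closed (hV : V.IsWeakBialgebra)
    (h1 : V.comul V.one = ∑ i ∈ S, i.1 ⊗ₜ[k₁] i.2) (a b : H₁) :
    V.εsMap (V.mul (V.εsMap a) (V.εsMap b)) = V.mul (V.εsMap a) (V.εsMap b) := by
  set v := V.εsMap a with hv
  set w := V.εsMap b with hw
  have hΔ : V.comul (V.mul v w) = ∑ i ∈ S, i.1 ⊗ₜ[k₁] (V.mul v (V.mul w i.2)) := by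
    have e1 : V.comul (V.mul v w)
        = ∑ i ∈ S, ∑ j ∈ S, (V.mul i.1 j.1) ⊗ₜ[k₁] (V.mul v (V.mul (V.mul i.2 w) j.2)) := by
      rw [hV.comul_mul, L4a V hV h1 a, L4a V hV h1 b, ← hv, ← hw, mul₂_sum_sum]
      simp_rw [mul₂_tmul]
      exact Finset.sum_congr rfl fun i _ => Finset.sum_congr rfl fun j _ => by
        rw [hV.mul_assoc v i.2 (V.mul w j.2), ← hV.mul_assoc i.2 w j.2]
    have e2 : ∀ (ψ : H₁ →ₗ[k₁] H₁),
        (∑ i ∈ S, ∑ j ∈ S, (V.mul i.1 j.1) ⊗ₜ[k₁] (ψ (V.mul i.2 j.2)))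
          = ∑ i ∈ S, i.1 ⊗ₜ[k₁] (ψ i.2) := fun ψ => by
      have := congrArg (TensorProduct.map LinearMap.id ψ) (oneone V hV h1)
      simpa only [map_sum, map_tmul, LinearMap.id_coe, id_eq] using this
    have e3 : ∀ (j : H₁ × H₁),
        (∑ i ∈ S, (V.mul i.1 j.1) ⊗ₜ[k₁] (V.mul v (V.mul (V.mul i.2 w) j.2)))
          = ∑ i ∈ S, (V.mul i.1 j.1) ⊗ₜ[k₁] (V.mul v (V.mul (V.mul w i.2) j.2)) := by
      intro j
      have hbet := congrArg (TensorProduct.map (V.mul.flip j.1)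
          ((V.mul v) ∘ₗ (V.mul.flip j.2) ∘ₗ (V.mul.flip w))) (D2' V hV h1)
      simp only [map_sum, map_tmul, LinearMap.comp_apply, LinearMap.flip_apply] at hbet
      have hbet2 := congrArg (TensorProduct.map (V.mul.flip j.1)
          ((V.mul v) ∘ₗ (V.mul.flip j.2) ∘ₗ (V.mul w))) (D2' V hV h1)
      simp only [map_sum, map_tmul, LinearMap.comp_apply, LinearMap.flip_apply] at hbet2
      rw [← hbet, ← hbet2]
      refine Finset.sum_congr rfl fun i _ => ?_
      rw [comm_bet V hV h1 i.2 b, ← hw]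
    rw [e1]
    rw [Finset.sum_comm]
    rw [show (∑ j ∈ S, ∑ i ∈ S, (V.mul i.1 j.1) ⊗ₜ[k₁] (V.mul v (V.mul (V.mul i.2 w) j.2)))
        = ∑ j ∈ S, ∑ i ∈ S, (V.mul i.1 j.1) ⊗ₜ[k₁] (V.mul v (V.mul (V.mul w i.2) j.2)) from
      Finset.sum_congr rfl fun j _ => e3 j]
    rw [Finset.sum_comm]
    rw [show (∑ i ∈ S, ∑ j ∈ S, (V.mul i.1 j.1) ⊗ₜ[k₁] (V.mul v (V.mul (V.mul w i.2) j.2)))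
        = ∑ i ∈ S, ∑ j ∈ S, (V.mul i.1 j.1) ⊗ₜ[k₁]
            (((V.mul v) ∘ₗ (V.mul w)) (V.mul i.2 j.2)) from
      Finset.sum_congr rfl fun i _ => Finset.sum_congr rfl fun j _ => by
        simp only [LinearMap.comp_apply]
        rw [hV.mul_assoc w i.2 j.2]]
    rw [e2]
    simp only [LinearMap.comp_apply]
  have h3 := congrArg (cR V) hΔ
  rw [cR_comul V hV] at h3
  simp only [map_sum, cR_tmul] at h3
  rw [εs_apply V h1 (V.mul v w)]
  simp_rw [hV.mul_assoc v w]
  exact h3.symm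

/-- `L29 : ε_s(a·ε_s b) = ε_s(a)·ε_s(b)`. -/
lemma εs_mul_right (hV : V.IsWeakBialgebra)
    (h1 : V.comul V.one = ∑ i ∈ S, i.1 ⊗ₜ[k₁] i.2) (a b : H₁) :
    V.εsMap (V.mul a (V.εsMap b)) = V.mul (V.εsMap a) (V.εsMap b) := by
  rw [← εs_mul_εs V hV h1 a (V.εsMap b)]
  exact εs_closed V hV h1 a b

/-- `L27 : ∑ 1'⊗ε_s(v·1'') = ∑ 1'⊗ε_s(1''·v)` for `v ∈ H_s`. -/
lemma L27 (hV : V.IsWeakBialgebra)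
    (h1 : V.comul V.one = ∑ i ∈ S, i.1 ⊗ₜ[k₁] i.2) (b : H₁) :
    (∑ i ∈ S, i.1 ⊗ₜ[k₁] (V.εsMap (V.mul (V.εsMap b) i.2)))
      = ∑ i ∈ S, i.1 ⊗ₜ[k₁] (V.εsMap (V.mul i.2 (V.εsMap b))) := by
  set v := V.εsMap b with hv
  have hcm : ∀ (x z : H₁), V.counit (V.mul (V.mul x v) z)
      = ∑ l ∈ S, V.counit (V.mul x l.1) * V.counit (V.mul (V.mul v l.2) z) := by
    intro x z
    have h0 := hV.counit_mul x v z
    rw [hv, L4a V hV h1 b, ← hv] at h0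
    simpa only [map_sum, map_tmul, LinearMap.comp_apply, LinearMap.flip_apply,
      LinearMap.mul'_apply, mulT_tmul] using h0
  have lhs_eq : (∑ i ∈ S, i.1 ⊗ₜ[k₁] (V.εsMap (V.mul v i.2)))
      = ∑ l ∈ S, ∑ j ∈ S, V.counit (V.mul (V.mul v l.2) j.2) • (l.1 ⊗ₜ[k₁] j.1) := by
    refine Finset.sum_congr rfl fun l _ => ?_
    rw [εs_apply V h1, tmul_sum_smul]
  have rhs_eq : (∑ i ∈ S, i.1 ⊗ₜ[k₁] (V.εsMap (V.mul i.2 v)))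
      = ∑ i ∈ S, ∑ j ∈ S, V.counit (V.mul (V.mul i.2 v) j.2) • (i.1 ⊗ₜ[k₁] j.1) := by
    refine Finset.sum_congr rfl fun i _ => ?_
    rw [εs_apply V h1, tmul_sum_smul]
  rw [lhs_eq, rhs_eq]
  have hGapp := congrArg (∑ j ∈ S, TensorProduct.map (LinearMap.id (R := k₁) (M := H₁))
      ((V.counit ∘ₗ (V.mul.flip j.2) ∘ₗ (V.mul v)).smulRight j.1)) (D1 V hV h1)
  simp only [LinearMap.coe_sum, Finset.sum_apply, LinearMap.sum_apply, map_sum, map_tmul,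
    LinearMap.id_coe, id_eq, LinearMap.smulRight_apply, LinearMap.comp_apply,
    LinearMap.flip_apply, tmul_smul] at hGapp
  rw [Finset.sum_comm] at hGapp
  conv_rhs at hGapp => rw [Finset.sum_comm]
  -- hGapp : ∑ l ∑ j ε((v l.2) j.2) • (ε̄s l.1 ⊗ j.1) = ∑ l ∑ j ε((v l.2) j.2) • (l.1 ⊗ j.1)
  rw [← hGapp]
  -- now expand `ε̄_s` and recombine by `hcm`
  rw [Finset.sum_comm]
  conv_rhs => rw [Finset.sum_comm]
  refine Finset.sum_congr rfl fun j _ => ?_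
  have expand : ∀ l : H₁ × H₁,
      V.counit (V.mul (V.mul v l.2) j.2) • ((V.barεsMap l.1) ⊗ₜ[k₁] j.1)
        = ∑ i ∈ S, (V.counit (V.mul i.2 l.1) * V.counit (V.mul (V.mul v l.2) j.2))
            • (i.1 ⊗ₜ[k₁] j.1) := fun l => by
    rw [barεs_apply V h1, sum_smul_tmul, Finset.smul_sum]
    exact Finset.sum_congr rfl fun i _ => by rw [smul_smul, mul_comm]
  simp_rw [expand]
  rw [Finset.sum_comm]
  refine Finset.sum_congr rfl fun i _ => ?_
  rw [hcm i.2 j.2, Finset.sum_smul]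


/-- `L25 : ∑ 1'⊗ε_s(v 1'') = ∑ 1'⊗ε_s(1'')·v` for `v ∈ H_s`. -/
lemma L25 (hV : V.IsWeakBialgebra)
    (h1 : V.comul V.one = ∑ i ∈ S, i.1 ⊗ₜ[k₁] i.2) (b : H₁) :
    (∑ i ∈ S, i.1 ⊗ₜ[k₁] (V.εsMap (V.mul (V.εsMap b) i.2)))
      = ∑ i ∈ S, i.1 ⊗ₜ[k₁] (V.mul (V.εsMap i.2) (V.εsMap b)) := by
  rw [L27 V hV h1 b]
  exact Finset.sum_congr rfl fun i _ => by rw [εs_mul_right V hV h1 i.2 b]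

lemma mul'_map_comm (f g : H₁ →ₗ[k₁] k₁) (t : H₁ ⊗[k₁] H₁) :
    (LinearMap.mul' k₁ k₁) (TensorProduct.map f g ((TensorProduct.comm k₁ H₁ H₁) t))
      = (LinearMap.mul' k₁ k₁) (TensorProduct.map g f t) := by
  have h : (LinearMap.mul' k₁ k₁) ∘ₗ (TensorProduct.map f g)
        ∘ₗ (TensorProduct.comm k₁ H₁ H₁).toLinearMap
      = (LinearMap.mul' k₁ k₁) ∘ₗ TensorProduct.map g f :=
    TensorProduct.ext' fun a c => by
      simp [comm_tmul, map_tmul, LinearMap.mul'_apply, mul_comm]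
  exact LinearMap.congr_fun h t

/-- The `counit_mul_op` axiom with the comultiplication legs in plain order. -/
lemma cmo (hV : V.IsWeakBialgebra) (x y z : H₁) :
    (LinearMap.mul' k₁ k₁) (TensorProduct.map (V.counit ∘ₗ (V.mul.flip z))
      (V.counit ∘ₗ (V.mul x)) (V.comul y)) = V.counit (V.mul (V.mul x y) z) := by
  have h0 := hV.counit_mul_op x y z
  rw [show TensorProduct.map (V.counit ∘ₗ V.mul x) (V.counit ∘ₗ V.mul.flip z)
      ((TensorProduct.comm k₁ H₁ H₁) (V.comul y))
    = TensorProduct.map (V.counit ∘ₗ V.mul x) (V.counit ∘ₗ V.mul.flip z)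
      ((TensorProduct.comm k₁ H₁ H₁) (V.comul y)) from rfl] at h0
  rw [mul'_map_comm] at h0
  exact h0.symm

/-- The building block `(u₁⊗u₂)⊗z ↦ (f₁u₁ f₂u₂) • c⊗(d z)`. -/
noncomputable def bb1 (c d : H₁) (f1 f2 : H₁ →ₗ[k₁] k₁) :
    (H₁ ⊗[k₁] H₁) ⊗[k₁] H₁ →ₗ[k₁] H₁ ⊗[k₁] H₁ :=
  (TensorProduct.lid k₁ (H₁ ⊗[k₁] H₁)).toLinearMap
    ∘ₗ TensorProduct.map ((LinearMap.mul' k₁ k₁) ∘ₗ TensorProduct.map f1 f2)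
        ((TensorProduct.mk k₁ H₁ H₁ c) ∘ₗ (V.mul d))

lemma bb1_tmul (c d : H₁) (f1 f2 : H₁ →ₗ[k₁] k₁) (X : H₁ ⊗[k₁] H₁) (z : H₁) :
    bb1 V c d f1 f2 (X ⊗ₜ[k₁] z)
      = ((LinearMap.mul' k₁ k₁) (TensorProduct.map f1 f2 X)) • (c ⊗ₜ[k₁] (V.mul d z)) := by
  simp [bb1, map_tmul, lid_tmul, TensorProduct.mk_apply]

/-- `T3 : (ε_s ⊗ id)(Δh) = ∑ 1' ⊗ h·1''`. -/
lemma T3 (hV : V.IsWeakBialgebra)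
    (h1 : V.comul V.one = ∑ i ∈ S, i.1 ⊗ₜ[k₁] i.2) (h : H₁) :
    LinearMap.rTensor H₁ V.εsMap (V.comul h) = ∑ i ∈ S, i.1 ⊗ₜ[k₁] (V.mul h i.2) := by
  obtain ⟨T, hT⟩ := TensorProduct.exists_finset (V.comul h)
  have hTT := comul_rep1 V hV h1 h hT
  -- Step A : LHS as a triple sum
  have stepA : LinearMap.rTensor H₁ V.εsMap (V.comul h)
      = ∑ t ∈ T, ∑ l ∈ S, ∑ j ∈ S,
          V.counit (V.mul (V.mul t.1 l.1) j.2) • (j.1 ⊗ₜ[k₁] (V.mul t.2 l.2)) := by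
    rw [hTT]
    simp only [map_sum, rTensor_tmul]
    exact Finset.sum_congr rfl fun t _ => Finset.sum_congr rfl fun l _ => by
      rw [εs_apply V h1, sum_smul_tmul]
  -- Step B : transfer through `C1` using `counit_mul_op`
  have hG1 := congrArg (∑ t ∈ T, ∑ j ∈ S, bb1 V j.1 t.2
      (V.counit ∘ₗ (V.mul.flip j.2)) (V.counit ∘ₗ (V.mul t.1))) (C1 V hV h1)
  simp only [LinearMap.coe_sum, Finset.sum_apply, LinearMap.sum_apply, map_sum,
    bb1_tmul] at hG1
  -- evaluate the inner `mul'∘map` on both sides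
  have evL : ∀ (t j l : H₁ × H₁),
      (LinearMap.mul' k₁ k₁) (TensorProduct.map (V.counit ∘ₗ (V.mul.flip j.2))
        (V.counit ∘ₗ (V.mul t.1)) (V.comul l.1))
      = V.counit (V.mul (V.mul t.1 l.1) j.2) := fun t j l => cmo V hV t.1 l.1 j.2
  have evR : ∀ (t j l m : H₁ × H₁),
      (LinearMap.mul' k₁ k₁) (TensorProduct.map (V.counit ∘ₗ (V.mul.flip j.2))
        (V.counit ∘ₗ (V.mul t.1)) (l.1 ⊗ₜ[k₁] (V.mul l.2 m.1)))
      = V.counit (V.mul l.1 j.2) * V.counit (V.mul t.1 (V.mul l.2 m.1)) := by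
    intro t j l m
    simp [map_tmul, LinearMap.mul'_apply]
  simp only [evL, evR] at hG1
  -- Step C : collapse the `j`-sum into `ε_s` and transfer through `D2`
  have hG2 := congrArg (∑ t ∈ T, ∑ m ∈ S, TensorProduct.map (LinearMap.id (R := k₁) (M := H₁))
      ((V.counit ∘ₗ (V.mul t.1) ∘ₗ (V.mul.flip m.1)).smulRight (V.mul t.2 m.2)))
      (D2 V hV h1)
  simp only [LinearMap.coe_sum, Finset.sum_apply, LinearMap.sum_apply, map_sum, map_tmul,
    LinearMap.id_coe, id_eq, LinearMap.smulRight_apply, LinearMap.comp_apply,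
    LinearMap.flip_apply, tmul_smul] at hG2
  -- Step D : recombine via `coassoc1` and `comul_mul`
  have hG3 := congrArg (LinearMap.lTensor H₁ ((cL V) ∘ₗ mul₂R V (V.comul h)))
      (coassoc1 V hV h1)
  simp only [map_sum, lTensor_tmul, LinearMap.comp_apply] at hG3
  have evG3L : ∀ l : H₁ × H₁, (cL V) (mul₂R V (V.comul h) (V.comul l.2)) = V.mul h l.2 := by
    intro l
    rw [mul₂R_apply, ← hV.comul_mul, cL_comul V hV]
  have evG3R : ∀ l m : H₁ × H₁,
      (cL V) (mul₂R V (V.comul h) ((V.mul l.2 m.1) ⊗ₜ[k₁] m.2))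
        = ∑ t ∈ T, V.counit (V.mul t.1 (V.mul l.2 m.1)) • (V.mul t.2 m.2) := by
    intro l m
    rw [mul₂R_apply, hT, mul₂_sum_tmul, map_sum]
    exact Finset.sum_congr rfl fun t _ => by rw [cL_tmul]
  simp only [evG3L, evG3R] at hG3
  -- Now chain everything together
  have fold : ∀ t l m : H₁ × H₁,
      (∑ j ∈ S, (V.counit (V.mul l.1 j.2) * V.counit (V.mul t.1 (V.mul l.2 m.1)))
          • (j.1 ⊗ₜ[k₁] (V.mul t.2 m.2)))
        = V.counit (V.mul t.1 (V.mul l.2 m.1))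
            • ((V.εsMap l.1) ⊗ₜ[k₁] (V.mul t.2 m.2)) := by
    intro t l m
    rw [εs_apply V h1, sum_smul_tmul, Finset.smul_sum]
    exact Finset.sum_congr rfl fun j _ => by rw [smul_smul, mul_comm]
  rw [stepA]
  calc (∑ t ∈ T, ∑ l ∈ S, ∑ j ∈ S,
          V.counit (V.mul (V.mul t.1 l.1) j.2) • (j.1 ⊗ₜ[k₁] (V.mul t.2 l.2)))
      = ∑ t ∈ T, ∑ j ∈ S, ∑ l ∈ S,
          V.counit (V.mul (V.mul t.1 l.1) j.2) • (j.1 ⊗ₜ[k₁] (V.mul t.2 l.2)) :=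
        Finset.sum_congr rfl fun t _ => Finset.sum_comm
    _ = ∑ t ∈ T, ∑ j ∈ S, ∑ l ∈ S, ∑ m ∈ S,
          (V.counit (V.mul l.1 j.2) * V.counit (V.mul t.1 (V.mul l.2 m.1)))
            • (j.1 ⊗ₜ[k₁] (V.mul t.2 m.2)) := hG1
    _ = ∑ t ∈ T, ∑ l ∈ S, ∑ m ∈ S, ∑ j ∈ S,
          (V.counit (V.mul l.1 j.2) * V.counit (V.mul t.1 (V.mul l.2 m.1)))
            • (j.1 ⊗ₜ[k₁] (V.mul t.2 m.2)) := by
        refine Finset.sum_congr rfl fun t _ => ?_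
        rw [Finset.sum_comm]
        exact Finset.sum_congr rfl fun l _ => Finset.sum_comm
    _ = ∑ t ∈ T, ∑ l ∈ S, ∑ m ∈ S, V.counit (V.mul t.1 (V.mul l.2 m.1))
            • ((V.εsMap l.1) ⊗ₜ[k₁] (V.mul t.2 m.2)) :=
        Finset.sum_congr rfl fun t _ => Finset.sum_congr rfl fun l _ =>
          Finset.sum_congr rfl fun m _ => fold t l m
    _ = ∑ t ∈ T, ∑ m ∈ S, ∑ l ∈ S, V.counit (V.mul t.1 (V.mul l.2 m.1))
            • ((V.εsMap l.1) ⊗ₜ[k₁] (V.mul t.2 m.2)) :=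
        Finset.sum_congr rfl fun t _ => Finset.sum_comm
    _ = ∑ t ∈ T, ∑ m ∈ S, ∑ l ∈ S, V.counit (V.mul t.1 (V.mul l.2 m.1))
            • (l.1 ⊗ₜ[k₁] (V.mul t.2 m.2)) := hG2
    _ = ∑ l ∈ S, ∑ m ∈ S, ∑ t ∈ T, V.counit (V.mul t.1 (V.mul l.2 m.1))
            • (l.1 ⊗ₜ[k₁] (V.mul t.2 m.2)) := by
        calc (∑ t ∈ T, ∑ m ∈ S, ∑ l ∈ S, V.counit (V.mul t.1 (V.mul l.2 m.1))
                • (l.1 ⊗ₜ[k₁] (V.mul t.2 m.2)))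
            = ∑ m ∈ S, ∑ t ∈ T, ∑ l ∈ S, V.counit (V.mul t.1 (V.mul l.2 m.1))
                • (l.1 ⊗ₜ[k₁] (V.mul t.2 m.2)) := Finset.sum_comm
          _ = ∑ m ∈ S, ∑ l ∈ S, ∑ t ∈ T, V.counit (V.mul t.1 (V.mul l.2 m.1))
                • (l.1 ⊗ₜ[k₁] (V.mul t.2 m.2)) :=
              Finset.sum_congr rfl fun m _ => Finset.sum_comm
          _ = ∑ l ∈ S, ∑ m ∈ S, ∑ t ∈ T, V.counit (V.mul t.1 (V.mul l.2 m.1))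
                • (l.1 ⊗ₜ[k₁] (V.mul t.2 m.2)) := Finset.sum_comm
    _ = ∑ l ∈ S, ∑ m ∈ S,
          l.1 ⊗ₜ[k₁] (∑ t ∈ T, V.counit (V.mul t.1 (V.mul l.2 m.1)) • (V.mul t.2 m.2)) :=
        Finset.sum_congr rfl fun l _ => Finset.sum_congr rfl fun m _ =>
          (tmul_sum_smul _ _ _ _).symm
    _ = ∑ l ∈ S, l.1 ⊗ₜ[k₁] (V.mul h l.2) := hG3.symm


lemma rT_subtype_inj (M : Type) [AddCommGroup M] [Module k₁ M] :
    Function.Injective (LinearMap.rTensor M (V.Hs).subtype) := by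
  obtain ⟨C, hC⟩ := Submodule.exists_isCompl V.Hs
  have hleft : LinearMap.rTensor M (V.Hs.projectionOnto C hC)
      ∘ₗ LinearMap.rTensor M (V.Hs).subtype = LinearMap.id := by
    rw [← LinearMap.rTensor_comp, Submodule.linearProjOfIsCompl_comp_subtype,
      LinearMap.rTensor_id]
  intro x y hxy
  have := congrArg (LinearMap.rTensor M (V.Hs.projectionOnto C hC)) hxy
  rwa [← LinearMap.comp_apply, ← LinearMap.comp_apply, hleft, LinearMap.id_apply,
    LinearMap.id_apply] at this

lemma sub_rr : (V.Hs).subtype ∘ₗ V.εsMap.rangeRestrict = V.εsMap :=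
  LinearMap.ext fun _ => rfl

/-- The pushed form of `coactionOfGrouplike`. -/
lemma pushβ (g : H₁) (x : ↥V.Hs) :
    LinearMap.rTensor H₁ (V.Hs).subtype (coactionOfGrouplike V g x)
      = TensorProduct.map V.εsMap (V.mul g) (V.comul (x : H₁)) := by
  have : LinearMap.rTensor H₁ (V.Hs).subtype
        ∘ₗ TensorProduct.map (V.εsMap.rangeRestrict) (V.mul g)
      = TensorProduct.map V.εsMap (V.mul g) :=
    TensorProduct.ext' fun a b => rfl
  rw [coactionOfGrouplike, LinearMap.comp_apply, LinearMap.comp_apply,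
    ← LinearMap.comp_apply, this]
  rfl

lemma assoc_nat {M N : Type} [AddCommGroup M] [Module k₁ M] [AddCommGroup N] [Module k₁ N]
    (f : M →ₗ[k₁] N) (t : (M ⊗[k₁] H₁) ⊗[k₁] H₁) :
    LinearMap.rTensor (H₁ ⊗[k₁] H₁) f ((TensorProduct.assoc k₁ M H₁ H₁) t)
      = (TensorProduct.assoc k₁ N H₁ H₁)
          (LinearMap.rTensor H₁ (LinearMap.rTensor H₁ f) t) := by
  have h : LinearMap.rTensor (H₁ ⊗[k₁] H₁) f ∘ₗ (TensorProduct.assoc k₁ M H₁ H₁).toLinearMap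
      = (TensorProduct.assoc k₁ N H₁ H₁).toLinearMap
          ∘ₗ LinearMap.rTensor H₁ (LinearMap.rTensor H₁ f) :=
    TensorProduct.ext_threefold fun a b c => by
      simp [assoc_tmul, rTensor_tmul]
  exact LinearMap.congr_fun h t

/-- `flatC12 : (Δ1⊗1)(1⊗Δ1) = (1⊗Δ1)(Δ1⊗1)` in flattened summed form. -/
lemma flatC12 (hV : V.IsWeakBialgebra)
    (h1 : V.comul V.one = ∑ i ∈ S, i.1 ⊗ₜ[k₁] i.2) :
    (∑ i ∈ S, ∑ j ∈ S, i.1 ⊗ₜ[k₁] ((V.mul i.2 j.1) ⊗ₜ[k₁] j.2))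
      = ∑ i ∈ S, ∑ j ∈ S, i.1 ⊗ₜ[k₁] ((V.mul j.1 i.2) ⊗ₜ[k₁] j.2) := by
  have h := (C1 V hV h1).symm.trans (C2 V hV h1)
  have h2 := congrArg (TensorProduct.assoc k₁ H₁ H₁ H₁) h
  simpa only [map_sum, assoc_tmul] using h2

/-- The core identity for coassociativity of the coaction. -/
lemma CORE (hV : V.IsWeakBialgebra)
    (h1 : V.comul V.one = ∑ i ∈ S, i.1 ⊗ₜ[k₁] i.2) (v : H₁) :
    (∑ i ∈ S, ∑ j ∈ S, i.1 ⊗ₜ[k₁] ((V.mul i.2 j.1) ⊗ₜ[k₁] (V.mul v j.2)))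
      = ∑ j ∈ S, ∑ m ∈ S, ∑ l ∈ S, j.1 ⊗ₜ[k₁]
          ((V.mul l.1 (V.mul j.2 m.1)) ⊗ₜ[k₁] (V.mul (V.mul v l.2) m.2)) := by
  have hA := congrArg (LinearMap.lTensor H₁ (LinearMap.lTensor H₁ (V.mul v)))
    (flatC12 V hV h1)
  simp only [map_sum, lTensor_tmul] at hA
  have hC : ∀ i : H₁ × H₁, (∑ j ∈ S, (V.mul j.1 i.2) ⊗ₜ[k₁] (V.mul v j.2))
      = ∑ l ∈ S, ∑ m ∈ S, (V.mul (V.mul l.1 m.1) i.2) ⊗ₜ[k₁] (V.mul v (V.mul l.2 m.2)) := by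
    intro i
    have h := congrArg (TensorProduct.map (V.mul.flip i.2) (V.mul v)) (oneone V hV h1).symm
    simpa only [map_sum, map_tmul, LinearMap.flip_apply] using h
  have hD : ∀ l : H₁ × H₁,
      (∑ i ∈ S, ∑ m ∈ S, i.1 ⊗ₜ[k₁]
          ((V.mul l.1 (V.mul m.1 i.2)) ⊗ₜ[k₁] (V.mul (V.mul v l.2) m.2)))
        = ∑ i ∈ S, ∑ m ∈ S, i.1 ⊗ₜ[k₁]
            ((V.mul l.1 (V.mul i.2 m.1)) ⊗ₜ[k₁] (V.mul (V.mul v l.2) m.2)) := by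
    intro l
    have h := congrArg (LinearMap.lTensor H₁
        (TensorProduct.map (V.mul l.1) (V.mul (V.mul v l.2)))) (flatC12 V hV h1)
    simp only [map_sum, lTensor_tmul, map_tmul] at h
    exact h.symm
  calc (∑ i ∈ S, ∑ j ∈ S, i.1 ⊗ₜ[k₁] ((V.mul i.2 j.1) ⊗ₜ[k₁] (V.mul v j.2)))
      = ∑ i ∈ S, ∑ j ∈ S, i.1 ⊗ₜ[k₁] ((V.mul j.1 i.2) ⊗ₜ[k₁] (V.mul v j.2)) := hA
    _ = ∑ i ∈ S, i.1 ⊗ₜ[k₁] (∑ j ∈ S, (V.mul j.1 i.2) ⊗ₜ[k₁] (V.mul v j.2)) :=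
        Finset.sum_congr rfl fun i _ => (tmul_sum _ _ _).symm
    _ = ∑ i ∈ S, i.1 ⊗ₜ[k₁] (∑ l ∈ S, ∑ m ∈ S,
          (V.mul (V.mul l.1 m.1) i.2) ⊗ₜ[k₁] (V.mul v (V.mul l.2 m.2))) :=
        Finset.sum_congr rfl fun i _ => by rw [hC i]
    _ = ∑ i ∈ S, ∑ l ∈ S, ∑ m ∈ S, i.1 ⊗ₜ[k₁]
          ((V.mul (V.mul l.1 m.1) i.2) ⊗ₜ[k₁] (V.mul v (V.mul l.2 m.2))) :=
        Finset.sum_congr rfl fun i _ => by simp_rw [tmul_sum]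
    _ = ∑ i ∈ S, ∑ l ∈ S, ∑ m ∈ S, i.1 ⊗ₜ[k₁]
          ((V.mul l.1 (V.mul m.1 i.2)) ⊗ₜ[k₁] (V.mul (V.mul v l.2) m.2)) :=
        Finset.sum_congr rfl fun i _ => Finset.sum_congr rfl fun l _ =>
          Finset.sum_congr rfl fun m _ => by
            rw [hV.mul_assoc l.1 m.1 i.2, hV.mul_assoc v l.2 m.2]
    _ = ∑ l ∈ S, ∑ i ∈ S, ∑ m ∈ S, i.1 ⊗ₜ[k₁]
          ((V.mul l.1 (V.mul m.1 i.2)) ⊗ₜ[k₁] (V.mul (V.mul v l.2) m.2)) := Finset.sum_comm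
    _ = ∑ l ∈ S, ∑ i ∈ S, ∑ m ∈ S, i.1 ⊗ₜ[k₁]
          ((V.mul l.1 (V.mul i.2 m.1)) ⊗ₜ[k₁] (V.mul (V.mul v l.2) m.2)) :=
        Finset.sum_congr rfl fun l _ => hD l
    _ = ∑ i ∈ S, ∑ l ∈ S, ∑ m ∈ S, i.1 ⊗ₜ[k₁]
          ((V.mul l.1 (V.mul i.2 m.1)) ⊗ₜ[k₁] (V.mul (V.mul v l.2) m.2)) := Finset.sum_comm
    _ = ∑ i ∈ S, ∑ m ∈ S, ∑ l ∈ S, i.1 ⊗ₜ[k₁]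
          ((V.mul l.1 (V.mul i.2 m.1)) ⊗ₜ[k₁] (V.mul (V.mul v l.2) m.2)) :=
        Finset.sum_congr rfl fun i _ => Finset.sum_comm


lemma comul_coe (hV : V.IsWeakBialgebra)
    (h1 : V.comul V.one = ∑ i ∈ S, i.1 ⊗ₜ[k₁] i.2) (x : ↥V.Hs) :
    V.comul (x : H₁) = ∑ i ∈ S, i.1 ⊗ₜ[k₁] (V.mul (x : H₁) i.2) := by
  have h := L4a V hV h1 (x : H₁)
  rwa [εs_coe V hV h1 x] at h

lemma mul₂_tmul_sum {ι : Type} (T : Finset ι) (f g : ι → H₁) (c d : H₁) :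
    V.mul₂ (c ⊗ₜ[k₁] d) (∑ t ∈ T, f t ⊗ₜ[k₁] g t)
      = ∑ t ∈ T, (V.mul c (f t)) ⊗ₜ[k₁] (V.mul d (g t)) := by
  simp [WBData.mul₂, tmul_sum, map_sum, tensorTensorTensorComm_tmul, mulT_tmul]

lemma comul_g_rep (hV : V.IsWeakBialgebra)
    (h1 : V.comul V.one = ∑ i ∈ S, i.1 ⊗ₜ[k₁] i.2) {g : H₁}
    (hg1 : V.comul g = V.mul₂ (g ⊗ₜ[k₁] g) (V.comul V.one)) :
    V.comul g = ∑ i ∈ S, (V.mul g i.1) ⊗ₜ[k₁] (V.mul g i.2) := by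
  rw [hg1, h1, mul₂_tmul_sum]

lemma K1 (hV : V.IsWeakBialgebra)
    (h1 : V.comul V.one = ∑ i ∈ S, i.1 ⊗ₜ[k₁] i.2) {g : H₁}
    (hg1 : V.comul g = V.mul₂ (g ⊗ₜ[k₁] g) (V.comul V.one)) (a : H₁) :
    V.comul (V.mul g a) = TensorProduct.map (V.mul g) (V.mul g) (V.comul a) := by
  obtain ⟨T, hT⟩ := TensorProduct.exists_finset (V.comul a)
  have honeA : V.comul a = ∑ i ∈ S, ∑ t ∈ T, (V.mul i.1 t.1) ⊗ₜ[k₁] (V.mul i.2 t.2) := by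
    conv_lhs => rw [show a = V.mul V.one a from (hV.one_mul a).symm]
    rw [hV.comul_mul, h1, hT, mul₂_sum_sum]
    simp_rw [mul₂_tmul]
  calc V.comul (V.mul g a) = V.mul₂ (V.comul g) (V.comul a) := hV.comul_mul g a
    _ = ∑ i ∈ S, ∑ t ∈ T, (V.mul (V.mul g i.1) t.1) ⊗ₜ[k₁] (V.mul (V.mul g i.2) t.2) := by
        rw [comul_g_rep V hV h1 hg1, hT, mul₂_sum_sum]
        simp_rw [mul₂_tmul]
    _ = ∑ i ∈ S, ∑ t ∈ T, (V.mul g (V.mul i.1 t.1)) ⊗ₜ[k₁] (V.mul g (V.mul i.2 t.2)) :=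
        Finset.sum_congr rfl fun i _ => Finset.sum_congr rfl fun t _ => by
          rw [hV.mul_assoc, hV.mul_assoc]
    _ = TensorProduct.map (V.mul g) (V.mul g)
          (∑ i ∈ S, ∑ t ∈ T, (V.mul i.1 t.1) ⊗ₜ[k₁] (V.mul i.2 t.2)) := by
        simp only [map_sum, map_tmul]
    _ = TensorProduct.map (V.mul g) (V.mul g) (V.comul a) := by rw [← honeA]

lemma K2 (hV : V.IsWeakBialgebra)
    (h1 : V.comul V.one = ∑ i ∈ S, i.1 ⊗ₜ[k₁] i.2) {g : H₁}
    (hg2 : V.εsMap g = V.one) (a : H₁) :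
    V.εsMap (V.mul g a) = V.εsMap a := by
  rw [← εs_mul_εs V hV h1 g a, hg2, hV.one_mul]

lemma rid_nat (t : ↥V.Hs ⊗[k₁] k₁) :
    (V.Hs).subtype ((TensorProduct.rid k₁ ↥V.Hs) t)
      = (TensorProduct.rid k₁ H₁) (LinearMap.rTensor k₁ (V.Hs).subtype t) := by
  have h : (V.Hs).subtype ∘ₗ (TensorProduct.rid k₁ ↥V.Hs).toLinearMap
      = (TensorProduct.rid k₁ H₁).toLinearMap ∘ₗ LinearMap.rTensor k₁ (V.Hs).subtype :=
    TensorProduct.ext' fun u c => by simp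
  exact LinearMap.congr_fun h t

/-- Part 1, counitality. -/
lemma con2 (hV : V.IsWeakBialgebra)
    (h1 : V.comul V.one = ∑ i ∈ S, i.1 ⊗ₜ[k₁] i.2) {g : H₁}
    (hg2 : V.εsMap g = V.one) (x : ↥V.Hs) :
    (TensorProduct.rid k₁ ↥V.Hs)
      (LinearMap.lTensor (↥V.Hs) V.counit (coactionOfGrouplike V g x)) = x := by
  apply Subtype.coe_injective
  show (V.Hs).subtype _ = ((x : ↥V.Hs) : H₁)
  rw [rid_nat]
  rw [show LinearMap.rTensor k₁ (V.Hs).subtype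
        (LinearMap.lTensor (↥V.Hs) V.counit (coactionOfGrouplike V g x))
      = LinearMap.lTensor H₁ V.counit
          (LinearMap.rTensor H₁ (V.Hs).subtype (coactionOfGrouplike V g x)) from by
    rw [← LinearMap.comp_apply, LinearMap.rTensor_comp_lTensor,
      ← LinearMap.lTensor_comp_rTensor, LinearMap.comp_apply]]
  rw [pushβ, comul_coe V hV h1 x]
  simp only [map_sum, map_tmul, lTensor_tmul, LinearEquiv.coe_coe, rid_tmul]
  have e1 : (∑ i ∈ S, V.counit (V.mul g (V.mul (x : H₁) i.2)) • V.εsMap i.1)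
      = V.εsMap (∑ i ∈ S, V.counit (V.mul (V.mul g (x : H₁)) i.2) • i.1) := by
    rw [map_sum]
    exact Finset.sum_congr rfl fun i _ => by rw [map_smul, hV.mul_assoc]
  rw [e1, ← εs_apply V h1, εs_idem V hV h1, K2 V hV h1 hg2, εs_coe V hV h1 x]

/-- Part 1, compatibility. -/
lemma con3 (hV : V.IsWeakBialgebra)
    (h1 : V.comul V.one = ∑ i ∈ S, i.1 ⊗ₜ[k₁] i.2) {g : H₁}
    (hg2 : V.εsMap g = V.one) (x : ↥V.Hs) :
    LinearMap.rTensor H₁ (V.Hs).subtype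
        (LinearMap.lTensor (↥V.Hs) V.εsMap (coactionOfGrouplike V g x))
      = LinearMap.lTensor H₁ V.εsMap (V.comul (V.εsMap (x : H₁))) := by
  rw [show LinearMap.rTensor H₁ (V.Hs).subtype
        (LinearMap.lTensor (↥V.Hs) V.εsMap (coactionOfGrouplike V g x))
      = LinearMap.lTensor H₁ V.εsMap
          (LinearMap.rTensor H₁ (V.Hs).subtype (coactionOfGrouplike V g x)) from by
    rw [← LinearMap.comp_apply, LinearMap.rTensor_comp_lTensor,
      ← LinearMap.lTensor_comp_rTensor, LinearMap.comp_apply]]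
  rw [pushβ, εs_coe V hV h1 x, comul_coe V hV h1 x]
  simp only [map_sum, map_tmul, lTensor_tmul]
  have e1 : (∑ i ∈ S, V.εsMap i.1 ⊗ₜ[k₁] V.εsMap (V.mul g (V.mul (x : H₁) i.2)))
      = ∑ i ∈ S, V.εsMap i.1 ⊗ₜ[k₁] V.εsMap (V.mul (x : H₁) i.2) :=
    Finset.sum_congr rfl fun i _ => by rw [K2 V hV h1 hg2]
  rw [e1]
  have e2 := congrArg (TensorProduct.map (LinearMap.id (R := k₁) (M := H₁))
      (V.εsMap ∘ₗ V.mul (x : H₁))) (D2 V hV h1)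
  simpa only [map_sum, map_tmul, LinearMap.id_coe, id_eq, LinearMap.comp_apply] using e2

/-- Part 1, recovery of the group-like element. -/
lemma grec (hV : V.IsWeakBialgebra)
    (h1 : V.comul V.one = ∑ i ∈ S, i.1 ⊗ₜ[k₁] i.2) {g : H₁}
    (hg2 : V.εsMap g = V.one) :
    grouplikeOfCoaction V (coactionOfGrouplike V g) = g := by
  rw [grouplikeOfCoaction]
  rw [LinearMap.rTensor_comp, LinearMap.comp_apply]
  rw [pushβ]
  rw [show ((oneHs V : ↥V.Hs) : H₁) = V.one from by
    show V.εsMap V.one = V.one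
    exact εs_one V hV h1]
  have e2 := congrArg (TensorProduct.map (LinearMap.id (R := k₁) (M := H₁)) (V.mul g))
      (D2 V hV h1)
  simp only [map_sum, map_tmul, LinearMap.id_coe, id_eq] at e2
  have e3 : TensorProduct.map V.εsMap (V.mul g) (V.comul V.one)
      = ∑ i ∈ S, i.1 ⊗ₜ[k₁] (V.mul g i.2) := by
    rw [h1]
    simp only [map_sum, map_tmul]
    exact e2
  rw [e3]
  simp only [map_sum, rTensor_tmul, lid_tmul]
  rw [show (∑ i ∈ S, V.counit i.1 • V.mul g i.2) = V.mul g (∑ i ∈ S, V.counit i.1 • i.2) from by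
    rw [map_sum]
    exact (Finset.sum_congr rfl fun i _ => by rw [map_smul]).symm]
  rw [sum_eps_p V hV h1, hV.mul_one]


/-- Part 1, coassociativity. -/
lemma con1 (hV : V.IsWeakBialgebra)
    (h1 : V.comul V.one = ∑ i ∈ S, i.1 ⊗ₜ[k₁] i.2) {g : H₁}
    (hg1 : V.comul g = V.mul₂ (g ⊗ₜ[k₁] g) (V.comul V.one)) (x : ↥V.Hs) :
    (TensorProduct.assoc k₁ (↥V.Hs) H₁ H₁)
        (LinearMap.rTensor H₁ (coactionOfGrouplike V g) (coactionOfGrouplike V g x))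
      = LinearMap.lTensor (↥V.Hs) V.comul (coactionOfGrouplike V g x) := by
  set P : H₁ →ₗ[k₁] H₁ ⊗[k₁] H₁ := TensorProduct.map V.εsMap (V.mul g) ∘ₗ V.comul with hP
  have pushP : ∀ y : ↥V.Hs,
      LinearMap.rTensor H₁ (V.Hs).subtype (coactionOfGrouplike V g y) = P (y : H₁) := by
    intro y; rw [pushβ]; rfl
  apply rT_subtype_inj V (H₁ ⊗[k₁] H₁)
  set v : H₁ := (x : H₁) with hv
  have hΔv : V.comul v = ∑ j ∈ S, j.1 ⊗ₜ[k₁] (V.mul v j.2) := comul_coe V hV h1 x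
  have hPv : P v = ∑ j ∈ S, (V.εsMap j.1) ⊗ₜ[k₁] (V.mul g (V.mul v j.2)) := by
    rw [hP, LinearMap.comp_apply, hΔv]
    simp only [map_sum, map_tmul]
  have hRHS : LinearMap.rTensor (H₁ ⊗[k₁] H₁) (V.Hs).subtype
      (LinearMap.lTensor (↥V.Hs) V.comul (coactionOfGrouplike V g x))
      = LinearMap.lTensor H₁ V.comul (P v) := by
    rw [← LinearMap.comp_apply, LinearMap.rTensor_comp_lTensor,
      ← LinearMap.lTensor_comp_rTensor, LinearMap.comp_apply, pushP]
  have hLHS : LinearMap.rTensor (H₁ ⊗[k₁] H₁) (V.Hs).subtype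
      ((TensorProduct.assoc k₁ (↥V.Hs) H₁ H₁)
        (LinearMap.rTensor H₁ (coactionOfGrouplike V g) (coactionOfGrouplike V g x)))
      = (TensorProduct.assoc k₁ H₁ H₁ H₁)
          (LinearMap.rTensor H₁ P (P v)) := by
    rw [assoc_nat]
    congr 1
    rw [← LinearMap.comp_apply, ← LinearMap.rTensor_comp]
    rw [show LinearMap.rTensor H₁ (V.Hs).subtype ∘ₗ coactionOfGrouplike V g
        = P ∘ₗ (V.Hs).subtype from LinearMap.ext fun u => by
      rw [LinearMap.comp_apply, pushP]; rfl]
    rw [LinearMap.rTensor_comp, LinearMap.comp_apply, pushP]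
  rw [hRHS, hLHS]
  -- Now everything happens in `H₁`-tensors.
  have hPεs : ∀ c : H₁, P (V.εsMap c)
      = ∑ i ∈ S, i.1 ⊗ₜ[k₁] (V.mul g (V.mul i.2 (V.εsMap c))) := by
    intro c
    rw [hP, LinearMap.comp_apply, L4b V hV h1 c]
    simp only [map_sum, map_tmul]
    have e := congrArg (TensorProduct.map (LinearMap.id (R := k₁) (M := H₁))
        ((V.mul g) ∘ₗ (V.mul.flip (V.εsMap c)))) (D2 V hV h1)
    simpa only [map_sum, map_tmul, LinearMap.id_coe, id_eq, LinearMap.comp_apply,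
      LinearMap.flip_apply] using e
  have hL : (TensorProduct.assoc k₁ H₁ H₁ H₁) (LinearMap.rTensor H₁ P (P v))
      = ∑ j ∈ S, ∑ i ∈ S, i.1 ⊗ₜ[k₁]
          ((V.mul g (V.mul i.2 (V.εsMap j.1))) ⊗ₜ[k₁] (V.mul g (V.mul v j.2))) := by
    rw [hPv]
    simp only [map_sum, rTensor_tmul]
    refine Finset.sum_congr rfl fun j _ => ?_
    rw [hPεs j.1, sum_tmul, map_sum]
    exact Finset.sum_congr rfl fun i _ => by rw [assoc_tmul]
  rw [hL]
  -- `D2`-transfer on the `j`-copy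
  have hT1 := congrArg (∑ i ∈ S, (TensorProduct.mk k₁ H₁ (H₁ ⊗[k₁] H₁) i.1)
      ∘ₗ TensorProduct.map ((V.mul g) ∘ₗ (V.mul i.2)) ((V.mul g) ∘ₗ (V.mul v)))
      (D2 V hV h1)
  simp only [LinearMap.coe_sum, Finset.sum_apply, LinearMap.sum_apply, map_sum,
    LinearMap.comp_apply, map_tmul, TensorProduct.mk_apply] at hT1
  rw [Finset.sum_comm]
  rw [hT1]
  -- identify with the dressed CORE identity
  have hCORE := congrArg (LinearMap.lTensor H₁
      (TensorProduct.map (V.mul g) (V.mul g))) (CORE V hV h1 v)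
  simp only [map_sum, lTensor_tmul, map_tmul] at hCORE
  rw [hCORE]
  -- now compute the right-hand side
  rw [hPv]
  simp only [map_sum, lTensor_tmul]
  have e := congrArg (TensorProduct.map (LinearMap.id (R := k₁) (M := H₁))
      (TensorProduct.map (V.mul g) (V.mul g) ∘ₗ mul₂R V (V.comul v) ∘ₗ V.comul))
      (D2 V hV h1)
  simp only [map_sum, map_tmul, LinearMap.id_coe, id_eq, LinearMap.comp_apply] at e
  have stepR : (∑ j ∈ S, (V.εsMap j.1) ⊗ₜ[k₁] (V.comul (V.mul g (V.mul v j.2))))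
      = ∑ j ∈ S, j.1 ⊗ₜ[k₁] (TensorProduct.map (V.mul g) (V.mul g)
          (mul₂R V (V.comul v) (V.comul j.2))) := by
    rw [← e]
    refine Finset.sum_congr rfl fun j _ => ?_
    congr 1
    rw [K1 V hV h1 hg1, mul₂R_apply, ← hV.comul_mul]
  rw [stepR]
  have hco := congrArg (LinearMap.lTensor H₁
      (TensorProduct.map (V.mul g) (V.mul g) ∘ₗ mul₂R V (V.comul v)))
      (coassoc1 V hV h1)
  simp only [map_sum, lTensor_tmul, LinearMap.comp_apply] at hco
  rw [hco]
  refine Finset.sum_congr rfl fun j _ => Finset.sum_congr rfl fun m _ => ?_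
  rw [mul₂R_apply, hΔv, mul₂_sum_tmul]
  simp only [map_sum, map_tmul]
  rw [tmul_sum]


/-- Part 2: a compatible coaction comes from a right group-like element. -/
lemma part2 (hV : V.IsWeakBialgebra)
    (h1 : V.comul V.one = ∑ i ∈ S, i.1 ⊗ₜ[k₁] i.2)
    (β : ↥V.Hs →ₗ[k₁] ↥V.Hs ⊗[k₁] H₁)
    (hco : ∀ x : ↥V.Hs, (TensorProduct.assoc k₁ (↥V.Hs) H₁ H₁)
        (LinearMap.rTensor H₁ β (β x)) = LinearMap.lTensor (↥V.Hs) V.comul (β x))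
    (hcp : ∀ x : ↥V.Hs, LinearMap.rTensor H₁ (V.Hs).subtype
        (LinearMap.lTensor (↥V.Hs) V.εsMap (β x))
      = LinearMap.lTensor H₁ V.εsMap (V.comul (V.εsMap (x : H₁)))) :
    V.IsRightGroupLike (grouplikeOfCoaction V β) ∧
      coactionOfGrouplike V (grouplikeOfCoaction V β) = β := by
  set γT : ↥V.Hs ⊗[k₁] H₁ →ₗ[k₁] H₁ :=
    (TensorProduct.lid k₁ H₁).toLinearMap ∘ₗ LinearMap.rTensor H₁ V.counit
      ∘ₗ LinearMap.rTensor H₁ (V.Hs).subtype with hγT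
  set γ : ↥V.Hs →ₗ[k₁] H₁ := γT ∘ₗ β with hγ
  have γT_tmul : ∀ (u : ↥V.Hs) (z : H₁), γT (u ⊗ₜ[k₁] z) = V.counit (u : H₁) • z := by
    intro u z
    simp [hγT, rTensor_tmul, lid_tmul]
  -- the group-like element
  have hgdef : grouplikeOfCoaction V β = γ (oneHs V) := by
    rw [grouplikeOfCoaction, LinearMap.rTensor_comp, hγ]
    rfl
  set g : H₁ := γ (oneHs V) with hgg
  have coe1 : ((oneHs V : ↥V.Hs) : H₁) = V.one := by
    show V.εsMap V.one = V.one
    exact εs_one V hV h1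
  -- R1 : (γ ⊗ id)β = Δ ∘ γ
  set Θ : ↥V.Hs ⊗[k₁] (H₁ ⊗[k₁] H₁) →ₗ[k₁] H₁ ⊗[k₁] H₁ :=
    (TensorProduct.lid k₁ (H₁ ⊗[k₁] H₁)).toLinearMap
      ∘ₗ TensorProduct.map (V.counit ∘ₗ (V.Hs).subtype) LinearMap.id with hΘ
  have hm1 : Θ ∘ₗ (TensorProduct.assoc k₁ (↥V.Hs) H₁ H₁).toLinearMap
      = LinearMap.rTensor H₁ γT :=
    TensorProduct.ext_threefold fun u h z => by
      simp [hΘ, assoc_tmul, map_tmul, lid_tmul, γT_tmul, rTensor_tmul,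
        TensorProduct.smul_tmul']
  have hm2 : Θ ∘ₗ LinearMap.lTensor (↥V.Hs) V.comul = V.comul ∘ₗ γT :=
    TensorProduct.ext' fun u z => by
      simp [hΘ, lTensor_tmul, map_tmul, lid_tmul, γT_tmul, map_smul]
  have hR1 : ∀ x : ↥V.Hs, LinearMap.rTensor H₁ γ (β x) = V.comul (γ x) := by
    intro x
    have h := congrArg Θ (hco x)
    rw [show Θ ((TensorProduct.assoc k₁ (↥V.Hs) H₁ H₁) (LinearMap.rTensor H₁ β (β x)))
        = LinearMap.rTensor H₁ γT (LinearMap.rTensor H₁ β (β x)) from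
      LinearMap.congr_fun hm1 _] at h
    rw [← LinearMap.comp_apply, ← LinearMap.rTensor_comp, ← hγ] at h
    rw [show Θ (LinearMap.lTensor (↥V.Hs) V.comul (β x)) = V.comul (γT (β x)) from
      LinearMap.congr_fun hm2 _] at h
    exact h
  -- R3 : ε_s ∘ γ = coe
  have hm3 : (cL V) ∘ₗ TensorProduct.map (V.Hs).subtype V.εsMap = V.εsMap ∘ₗ γT :=
    TensorProduct.ext' fun u z => by
      simp [cL_tmul, map_tmul, γT_tmul, map_smul]
  have hm4 : (cL V) ∘ₗ LinearMap.lTensor H₁ V.εsMap = V.εsMap ∘ₗ (cL V) :=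
    TensorProduct.ext' fun a b => by
      simp [cL_tmul, lTensor_tmul, map_smul]
  have hR3 : ∀ x : ↥V.Hs, V.εsMap (γ x) = (x : H₁) := by
    intro x
    have h := congrArg (cL V) (hcp x)
    rw [show LinearMap.rTensor H₁ (V.Hs).subtype (LinearMap.lTensor (↥V.Hs) V.εsMap (β x))
        = TensorProduct.map (V.Hs).subtype V.εsMap (β x) from by
      rw [← LinearMap.comp_apply, LinearMap.rTensor_comp_lTensor]] at h
    rw [show (cL V) (TensorProduct.map (V.Hs).subtype V.εsMap (β x))
        = V.εsMap (γT (β x)) from LinearMap.congr_fun hm3 _] at h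
    rw [show (cL V) (LinearMap.lTensor H₁ V.εsMap (V.comul (V.εsMap (x : H₁))))
        = V.εsMap ((cL V) (V.comul (V.εsMap (x : H₁)))) from LinearMap.congr_fun hm4 _] at h
    rw [cL_comul V hV, εs_idem V hV h1, εs_coe V hV h1 x] at h
    rw [hγ, LinearMap.comp_apply]
    exact h
  -- εs g = 1
  have hg2 : V.εsMap g = V.one := by
    rw [hgg, hR3 (oneHs V), coe1]
  -- γt and the reconstruction formula R20
  set γt : H₁ →ₗ[k₁] H₁ := γ ∘ₗ V.εsMap.rangeRestrict with hγt
  have γt_coe : ∀ u : ↥V.Hs, γt ((u : ↥V.Hs) : H₁) = γ u := by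
    intro u
    rw [hγt, LinearMap.comp_apply]
    exact congrArg γ (Subtype.ext (εs_coe V hV h1 u) :
      (V.εsMap.rangeRestrict (u : H₁) : ↥V.Hs) = u)
  have hγtι : γt ∘ₗ (V.Hs).subtype = γ := LinearMap.ext fun u => γt_coe u
  have hR20 : ∀ x : ↥V.Hs, γ x
      = ∑ i ∈ S, V.mul (γt i.1) (V.εsMap (V.mul (x : H₁) i.2)) := by
    intro x
    have step1 : γ x = V.mulT (LinearMap.lTensor H₁ V.εsMap (V.comul (γ x))) :=
      (mul_εs_comul V hV h1 (γ x)).symm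
    rw [step1, ← hR1 x]
    rw [show LinearMap.lTensor H₁ V.εsMap (LinearMap.rTensor H₁ γ (β x))
        = TensorProduct.map γ V.εsMap (β x) from by
      rw [← LinearMap.comp_apply, LinearMap.lTensor_comp_rTensor]]
    rw [show TensorProduct.map γ V.εsMap = TensorProduct.map γt LinearMap.id
        ∘ₗ TensorProduct.map (V.Hs).subtype V.εsMap from by
      rw [← TensorProduct.map_comp, hγtι, LinearMap.id_comp]]
    rw [LinearMap.comp_apply]
    rw [show TensorProduct.map (V.Hs).subtype V.εsMap (β x)
        = LinearMap.lTensor H₁ V.εsMap (V.comul (V.εsMap (x : H₁))) from by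
      rw [← hcp x]
      rw [show LinearMap.rTensor H₁ (V.Hs).subtype (LinearMap.lTensor (↥V.Hs) V.εsMap (β x))
          = TensorProduct.map (V.Hs).subtype V.εsMap (β x) from by
        rw [← LinearMap.comp_apply, LinearMap.rTensor_comp_lTensor]]]
    rw [εs_coe V hV h1 x, comul_coe V hV h1 x]
    simp only [map_sum, lTensor_tmul, map_tmul, LinearMap.id_coe, id_eq, mulT_tmul]
  -- G0 : γ x = g · x
  have hgsum : g = ∑ i ∈ S, V.mul (γt i.1) (V.εsMap i.2) := by
    rw [hgg, hR20 (oneHs V)]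
    refine Finset.sum_congr rfl fun i _ => ?_
    rw [coe1, hV.one_mul]
  have hG0 : ∀ x : ↥V.Hs, γ x = V.mul g (x : H₁) := by
    intro x
    have h25 := L25 V hV h1 (x : H₁)
    rw [εs_coe V hV h1 x] at h25
    have h := congrArg (V.mulT ∘ₗ TensorProduct.map γt LinearMap.id) h25
    simp only [LinearMap.comp_apply, map_sum, map_tmul, LinearMap.id_coe, id_eq,
      mulT_tmul] at h
    rw [hR20 x, h, hgsum]
    rw [map_sum, LinearMap.sum_apply]
    exact Finset.sum_congr rfl fun i _ => by rw [hV.mul_assoc]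
  have hγmap : γ = (V.mul g) ∘ₗ (V.Hs).subtype := LinearMap.ext fun u => hG0 u
  -- F6 : (ι ⊗ id) β = (ε_s ⊗ id) Δ γ
  have hεsγ : V.εsMap ∘ₗ γ = (V.Hs).subtype := LinearMap.ext fun u => hR3 u
  have hF6 : ∀ x : ↥V.Hs, LinearMap.rTensor H₁ (V.Hs).subtype (β x)
      = LinearMap.rTensor H₁ V.εsMap (V.comul (γ x)) := by
    intro x
    rw [← hR1 x]
    rw [show LinearMap.rTensor H₁ V.εsMap (LinearMap.rTensor H₁ γ (β x))
        = LinearMap.rTensor H₁ (V.εsMap ∘ₗ γ) (β x) from by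
      rw [LinearMap.rTensor_comp H₁ V.εsMap γ]; rfl]
    rw [hεsγ]
  -- G2 : Δ g = ∑ g·1' ⊗ g·1''
  have hG2 : V.comul g = ∑ i ∈ S, (V.mul g i.1) ⊗ₜ[k₁] (V.mul g i.2) := by
    have e1 : V.comul g = LinearMap.rTensor H₁ γ (β (oneHs V)) := (hR1 (oneHs V)).symm
    rw [e1, hγmap, LinearMap.rTensor_comp, LinearMap.comp_apply, hF6 (oneHs V),
      ← hgg]
    rw [T3 V hV h1 g]
    simp only [map_sum, rTensor_tmul]
  have hg1 : V.comul g = V.mul₂ (g ⊗ₜ[k₁] g) (V.comul V.one) := by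
    rw [h1, mul₂_tmul_sum, hG2]
  have hgl : V.IsRightGroupLike (grouplikeOfCoaction V β) := by
    rw [hgdef]; exact ⟨hg1, hg2⟩
  refine ⟨hgl, ?_⟩
  -- recovery of β
  rw [hgdef]
  apply LinearMap.ext
  intro x
  apply rT_subtype_inj V H₁
  rw [pushβ, hF6 x, hG0 x]
  rw [K1 V hV h1 hg1 ((x : ↥V.Hs) : H₁)]
  rw [comul_coe V hV h1 x]
  simp only [map_sum, map_tmul, rTensor_tmul]
  exact Finset.sum_congr rfl fun j _ => by rw [K2 V hV h1 hg2 j.1]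

end WBAux

end AuxWBA
/-- one-to-one correspondence between right group-like elements `g ∈ H` and
right `H`-coactions `β : H_s → H_s ⊗ H` satisfying
`(id⊗ε_s)∘β = (id⊗ε_s)∘Δ∘ε_s`; the correspondence sends `β` to `g = ε(1₀)1₁` and a right
group-like `g` to `β(x) = ε_s(x') ⊗ (g x'')`. -/
theorem grouplike_coaction_correspondence (hW : W.IsWeakBialgebra) :
    (∀ g : H, W.IsRightGroupLike g →
      IsCompatibleCoactionOnHs W (coactionOfGrouplike W g) ∧
      grouplikeOfCoaction W (coactionOfGrouplike W g) = g) ∧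
    (∀ β : ↥(W.Hs) →ₗ[k] ↥(W.Hs) ⊗[k] H, IsCompatibleCoactionOnHs W β →
      W.IsRightGroupLike (grouplikeOfCoaction W β) ∧
      coactionOfGrouplike W (grouplikeOfCoaction W β) = β) := by
  obtain ⟨S, h1⟩ := TensorProduct.exists_finset (W.comul W.one)
  constructor
  · intro g hg
    obtain ⟨hg1, hg2⟩ := hg
    exact ⟨⟨fun x => WBAux.con1 W hW h1 hg1 x, fun x => WBAux.con2 W hW h1 hg2 x,
        fun x => WBAux.con3 W hW h1 hg2 x⟩, WBAux.grec W hW h1 hg2⟩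
  · intro β hβ
    obtain ⟨hco, _hcu, hcp⟩ := hβ
    exact WBAux.part2 W hW h1 β hco hcp

end Statement12
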